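/- Every closed interval of a trim lattice is trim. -/

import Mathlib

section TrimDefs

variable {α : Type*} [Lattice α]

/-- `b` covers `a` within the subset `S`. -/
def CovByIn (S : Set α) (a b : α) : Prop :=
  a ∈ S ∧ b ∈ S ∧ a < b ∧ ¬ ∃ c ∈ S, a < c ∧ c < b

/-- A chain of successive covers within `S`. -/
def IsCoverChain (S : Set α) (c : List α) : Prop :=
  c.Chain' (CovByIn S) ∧ ∀ x ∈ c, x ∈ S

/-- Join-irreducible in `S`: has exactly one lower cover within `S`. -/
def JoinIrrIn (S : Set α) (x : α) : Prop :=
  x ∈ S ∧ ∃! y, CovByIn S y x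

/-- Meet-irreducible in `S`: has exactly one upper cover within `S`. -/
def MeetIrrIn (S : Set α) (x : α) : Prop :=
  x ∈ S ∧ ∃! y, CovByIn S x y

/-- `x` is left-modular in `S`: `(y ⊔ x) ⊓ z = y ⊔ (x ⊓ z)` for all `y < z` in `S`.
(For `S` a closed interval or the whole lattice, `⊔` and `⊓` computed in the
ambient lattice agree with those of the sublattice `S`.) -/
def LeftModularIn (S : Set α) (x : α) : Prop :=
  x ∈ S ∧ ∀ y ∈ S, ∀ z ∈ S, y < z → (y ⊔ x) ⊓ z = y ⊔ (x ⊓ z)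

/-- The (closed-interval) lattice `S` with least element `u` and greatest element `v`
is trim of length `k`: it has a maximal (unrefinable) chain from `u` to `v` with `k`
cover steps consisting of left-modular elements, every maximal chain has at most `k`
cover steps, and there are exactly `k` join-irreducible and `k` meet-irreducible
elements. -/
def IsTrimIn (S : Set α) (u v : α) (k : ℕ) : Prop :=
  (∃ c : List α, IsCoverChain S c ∧ c.head? = some u ∧ c.getLast? = some v ∧
      c.length = k + 1 ∧ ∀ x ∈ c, LeftModularIn S x) ∧
  (∀ c : List α, IsCoverChain S c → c.head? = some u → c.getLast? = some v →
      c.length ≤ k + 1) ∧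
  {x : α | JoinIrrIn S x}.ncard = k ∧ {x : α | MeetIrrIn S x}.ncard = k

end TrimDefs
set_option linter.unusedSectionVars false
namespace TrimProof

variable {α : Type*} [Lattice α] [Fintype α] {p q b y z : α}

lemma exists_minimal_mem {s : Set α} (hs : s.Nonempty) : ∃ m ∈ s, ∀ y ∈ s, ¬ y < m := by
  classical
  obtain ⟨m, hm, hmin⟩ := Finset.exists_minimal (s := Set.toFinset s)
    (by simpa [Set.toFinset_nonempty] using hs)
  exact ⟨m, by simpa using hm, fun y hy hlt => hlt.not_ge (hmin (by simpa using hy) hlt.le)⟩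

lemma exists_maximal_mem {s : Set α} (hs : s.Nonempty) : ∃ m ∈ s, ∀ y ∈ s, ¬ m < y := by
  classical
  obtain ⟨m, hm, hmax⟩ := Finset.exists_maximal (s := Set.toFinset s)
    (by simpa [Set.toFinset_nonempty] using hs)
  exact ⟨m, by simpa using hm, fun y hy hlt => hlt.not_ge (hmax (by simpa using hy) hlt.le)⟩

lemma icc_sup_mem (hy : y ∈ Set.Icc p q) (hz : z ∈ Set.Icc p q) : y ⊔ z ∈ Set.Icc p q :=
  ⟨le_trans hy.1 le_sup_left, sup_le hy.2 hz.2⟩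

lemma icc_inf_mem (hy : y ∈ Set.Icc p q) (hz : z ∈ Set.Icc p q) : y ⊓ z ∈ Set.Icc p q :=
  ⟨le_inf hy.1 hz.1, le_trans inf_le_left hy.2⟩

lemma exists_covByIn_above (hz : z ∈ Set.Icc p q) (hy : y ∈ Set.Icc p q) (hzy : z < y) :
    ∃ t, CovByIn (Set.Icc p q) z t ∧ t ≤ y := by
  obtain ⟨m, ⟨hmS, hzm, hmy⟩, hmin⟩ :=
    exists_minimal_mem (s := {t | t ∈ Set.Icc p q ∧ z < t ∧ t ≤ y}) ⟨y, hy, hzy, le_rfl⟩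
  refine ⟨m, ⟨hz, hmS, hzm, ?_⟩, hmy⟩
  rintro ⟨c, hcS, hzc, hcm⟩
  exact hmin c ⟨hcS, hzc, le_trans hcm.le hmy⟩ hcm

lemma exists_covByIn_below (hz : z ∈ Set.Icc p q) (hy : y ∈ Set.Icc p q) (hzy : z < y) :
    ∃ t, CovByIn (Set.Icc p q) t y ∧ z ≤ t := by
  obtain ⟨m, ⟨hmS, hzm, hmy⟩, hmax⟩ :=
    exists_maximal_mem (s := {t | t ∈ Set.Icc p q ∧ z ≤ t ∧ t < y}) ⟨z, hz, le_rfl, hzy⟩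
  refine ⟨m, ⟨hmS, hy, hmy, ?_⟩, hzm⟩
  rintro ⟨c, hcS, hmc, hcy⟩
  exact hmax c ⟨hcS, le_trans hzm hmc.le, hcy⟩ hmc

/-- Minimal-witness lemma: a minimal element of `Icc p q` below `z` but not below `b`
is join-irreducible. -/
lemma exists_joinIrr_witness (hb : p ≤ b) (hz : z ∈ Set.Icc p q) (hzb : ¬ z ≤ b) :
    ∃ j, JoinIrrIn (Set.Icc p q) j ∧ j ≤ z ∧ ¬ j ≤ b := by
  obtain ⟨j, ⟨hjS, hjz, hjb⟩, hmin⟩ :=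
    exists_minimal_mem (s := {t | t ∈ Set.Icc p q ∧ t ≤ z ∧ ¬ t ≤ b}) ⟨z, hz, le_rfl, hzb⟩
  have hpj : p < j := lt_of_le_of_ne hjS.1 (by rintro rfl; exact hjb hb)
  have huniq : ∀ d e, CovByIn (Set.Icc p q) d j → CovByIn (Set.Icc p q) e j → d = e := by
    intro d e hd he
    by_contra hne
    have hdb : d ≤ b := by
      by_contra hdb
      exact hmin d ⟨hd.1, le_trans hd.2.2.1.le hjz, hdb⟩ hd.2.2.1
    have heb : e ≤ b := by
      by_contra heb
      exact hmin e ⟨he.1, le_trans he.2.2.1.le hjz, heb⟩ he.2.2.1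
    have hed : ¬ e ≤ d := by
      intro hed
      exact he.2.2.2 ⟨d, hd.1, lt_of_le_of_ne hed (Ne.symm hne), hd.2.2.1⟩
    have hlt : d < d ⊔ e := lt_of_le_of_ne le_sup_left (by
      intro h; exact hed (le_trans le_sup_right h.symm.le))
    have hle : d ⊔ e ≤ j := sup_le hd.2.2.1.le he.2.2.1.le
    have : d ⊔ e = j := by
      by_contra hne2
      exact hd.2.2.2 ⟨d ⊔ e, icc_sup_mem hd.1 he.1, hlt, lt_of_le_of_ne hle hne2⟩
    have : j ≤ b := this ▸ sup_le hdb heb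
    exact hjb this
  obtain ⟨t, ht, -⟩ := exists_covByIn_below ⟨le_rfl, le_trans hjS.1 hjS.2⟩ hjS hpj
  exact ⟨j, ⟨hjS, t, ht, fun y hy => huniq y t hy ht⟩, hjz, hjb⟩

end TrimProof
namespace TrimProof
variable {α : Type*} [Lattice α] [Fintype α] {p q b y z t : α}

/-- Maximal-witness lemma: a maximal element of `Icc p q` above `z` but not above `b`
is meet-irreducible. -/
lemma exists_meetIrr_witness (hb : b ≤ q) (hz : z ∈ Set.Icc p q) (hbz : ¬ b ≤ z) :
    ∃ w, MeetIrrIn (Set.Icc p q) w ∧ z ≤ w ∧ ¬ b ≤ w := by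
  obtain ⟨w, ⟨hwS, hzw, hwb⟩, hmax⟩ :=
    exists_maximal_mem (s := {t | t ∈ Set.Icc p q ∧ z ≤ t ∧ ¬ b ≤ t}) ⟨z, hz, le_rfl, hbz⟩
  have hwq : w < q := lt_of_le_of_ne hwS.2 (by rintro rfl; exact hwb hb)
  have huniq : ∀ d e, CovByIn (Set.Icc p q) w d → CovByIn (Set.Icc p q) w e → d = e := by
    intro d e hd he
    by_contra hne
    have hdb : b ≤ d := by
      by_contra hdb
      exact hmax d ⟨hd.2.1, le_trans hzw hd.2.2.1.le, hdb⟩ hd.2.2.1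
    have heb : b ≤ e := by
      by_contra heb
      exact hmax e ⟨he.2.1, le_trans hzw he.2.2.1.le, heb⟩ he.2.2.1
    have hde : ¬ d ≤ e := by
      intro hde
      exact he.2.2.2 ⟨d, hd.2.1, hd.2.2.1, lt_of_le_of_ne hde hne⟩
    have hlt : d ⊓ e < d := lt_of_le_of_ne inf_le_left (by
      intro h; exact hde (le_trans h.symm.le inf_le_right))
    have hle : w ≤ d ⊓ e := le_inf hd.2.2.1.le he.2.2.1.le
    have heq : d ⊓ e = w := by
      by_contra hne2
      exact hd.2.2.2 ⟨d ⊓ e, icc_inf_mem hd.2.1 he.2.1,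
        lt_of_le_of_ne hle (Ne.symm hne2), hlt⟩
    exact hwb (heq ▸ le_inf hdb heb)
  obtain ⟨t, ht, -⟩ := exists_covByIn_above hwS ⟨le_trans hwS.1 hwS.2, le_rfl⟩ hwq
  exact ⟨w, ⟨hwS, t, ht, fun y hy => huniq y t hy ht⟩, hzw, hwb⟩

/-- If `z` is meet-irreducible with (unique) upper cover `t`, then every element
strictly above `z` is above `t`. -/
lemma meetIrr_cover_le (hz : MeetIrrIn (Set.Icc p q) z) (ht : CovByIn (Set.Icc p q) z t)
    (hy : y ∈ Set.Icc p q) (hzy : z < y) : t ≤ y := by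
  obtain ⟨t', ht', ht'y⟩ := exists_covByIn_above hz.1 hy hzy
  obtain ⟨c, hc, huniq⟩ := hz.2
  rw [huniq t ht, ← huniq t' ht']
  exact ht'y

end TrimProof
namespace TrimProof
section Lower
variable {α : Type*} [Lattice α] [Fintype α]

noncomputable def gam (x : ℕ → α) (j : α) : ℕ := sInf {l | j ≤ x l}
noncomputable def del (x : ℕ → α) (k : ℕ) (w : α) : ℕ := sSup {l | l ≤ k ∧ x l ≤ w}

variable {p q v w j : α} {k l : ℕ} {x : ℕ → α}

section Chain
variable (hpq : p ≤ q) (hx0 : x 0 = p) (hxk : x k = q)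
  (hcov : ∀ l, l < k → CovByIn (Set.Icc p q) (x l) (x (l+1)))

include hpq hx0 hxk hcov

lemma x_mem (h : l ≤ k) : x l ∈ Set.Icc p q := by
  rcases lt_or_eq_of_le h with h | h
  · exact (hcov l h).1
  · subst h; rw [hxk]; exact ⟨hpq, le_rfl⟩

lemma x_le_x : ∀ {a b : ℕ}, a ≤ b → b ≤ k → x a ≤ x b := by
  intro a b hab hbk
  induction b with
  | zero => rw [Nat.le_zero.mp hab]
  | succ n ih =>
    rcases Nat.lt_or_ge a (n+1) with h | h
    · exact le_trans (ih (Nat.lt_succ_iff.mp h) (le_trans (Nat.le_succ n) hbk))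
        (hcov n (Nat.lt_of_succ_le hbk)).2.2.1.le
    · rw [Nat.le_antisymm hab h]

lemma x_lt_x {a b : ℕ} (hab : a < b) (hbk : b ≤ k) : x a < x b :=
  lt_of_lt_of_le (hcov a (lt_of_lt_of_le hab hbk)).2.2.1
    (x_le_x hpq hx0 hxk hcov (Nat.succ_le_of_lt hab) hbk)

lemma le_x_gam (hj : j ≤ q) : j ≤ x (gam x j) := by
  have hne : Set.Nonempty {l | j ≤ x l} := ⟨k, show j ≤ x k by rw [hxk]; exact hj⟩
  exact Nat.sInf_mem hne

lemma gam_le_k (hj : j ≤ q) : gam x j ≤ k :=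
  Nat.sInf_le (by rw [Set.mem_setOf_eq, hxk]; exact hj)

lemma not_le_x_of_lt_gam (h : l < gam x j) : ¬ j ≤ x l :=
  fun hc => Nat.notMem_of_lt_sInf h hc

lemma gam_eq (h1 : j ≤ x (l+1)) (h2 : ¬ j ≤ x l) (hl : l + 1 ≤ k) : gam x j = l + 1 := by
  refine le_antisymm (Nat.sInf_le h1) ?_
  by_contra hc
  push_neg at hc
  exact h2 (le_trans (le_x_gam hpq hx0 hxk hcov (le_trans h1 ((x_mem hpq hx0 hxk hcov hl).2)))
    (x_le_x hpq hx0 hxk hcov (Nat.lt_succ_iff.mp hc) (le_trans (Nat.le_succ l) hl)))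

lemma gam_pos (hj : JoinIrrIn (Set.Icc p q) j) : 1 ≤ gam x j := by
  obtain ⟨y, hy, -⟩ := hj.2
  have hjp : ¬ j ≤ p := fun hc =>
    absurd (lt_of_lt_of_le hy.2.2.1 (le_trans hc hy.1.1)) (lt_irrefl _)
  rcases Nat.eq_zero_or_pos (gam x j) with h | h
  · exact absurd (h ▸ le_x_gam hpq hx0 hxk hcov hj.1.2 : j ≤ x 0) (by rw [hx0]; exact hjp)
  · exact h

lemma gam_surj (hl : l < k) :
    ∃ j, JoinIrrIn (Set.Icc p q) j ∧ j ≤ x (l+1) ∧ ¬ j ≤ x l ∧ gam x j = l + 1 := by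
  obtain ⟨j, hj, hjle, hjnle⟩ := exists_joinIrr_witness
    ((x_mem hpq hx0 hxk hcov hl.le).1) (x_mem hpq hx0 hxk hcov hl) (not_le_of_gt (hcov l hl).2.2.1)
  exact ⟨j, hj, hjle, hjnle, gam_eq hpq hx0 hxk hcov hjle hjnle hl⟩

lemma gam_inj (hJ : {y | JoinIrrIn (Set.Icc p q) y}.ncard = k)
    (hj : JoinIrrIn (Set.Icc p q) j) (hw : JoinIrrIn (Set.Icc p q) w)
    (hjw : gam x j = gam x w) : j = w := by
  classical
  refine Set.inj_on_of_surj_on_of_ncard_le (s := {y | JoinIrrIn (Set.Icc p q) y})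
    (t := ↑(Finset.Icc 1 k)) (fun a _ => gam x a) ?_ ?_ ?_ hj hw hjw (Set.toFinite _)
  · intro a ha
    simp only [Finset.coe_Icc, Set.mem_Icc]
    exact ⟨gam_pos hpq hx0 hxk hcov ha, gam_le_k hpq hx0 hxk hcov ha.1.2⟩
  · intro b hb
    simp only [Finset.coe_Icc, Set.mem_Icc] at hb
    obtain ⟨l, rfl⟩ := Nat.exists_eq_add_of_le hb.1
    obtain ⟨j', hj', -, -, hgam⟩ := gam_surj hpq hx0 hxk hcov (by omega : l < k)
    exact ⟨j', hj', by show gam x j' = 1 + l; omega⟩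
  · rw [hJ, Set.ncard_coe_finset, Nat.card_Icc]; omega

lemma del_mem (hw : w ∈ Set.Icc p q) : del x k w ≤ k ∧ x (del x k w) ≤ w := by
  have hne : Set.Nonempty {l | l ≤ k ∧ x l ≤ w} :=
    ⟨0, Nat.zero_le k, show x 0 ≤ w by rw [hx0]; exact hw.1⟩
  exact Nat.sSup_mem hne ⟨k, fun l hl => hl.1⟩

lemma x_del_le (hw : w ∈ Set.Icc p q) : x (del x k w) ≤ w :=
  (del_mem hpq hx0 hxk hcov hw).2

lemma del_le_k (hw : w ∈ Set.Icc p q) : del x k w ≤ k :=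
  (del_mem hpq hx0 hxk hcov hw).1

lemma not_x_le_of_del_lt (h : del x k w < l) (hl : l ≤ k) : ¬ x l ≤ w := by
  intro hc
  have hbd : BddAbove {l | l ≤ k ∧ x l ≤ w} := ⟨k, fun a ha => ha.1⟩
  have : l ∈ {l | l ≤ k ∧ x l ≤ w} := ⟨hl, hc⟩
  exact absurd (le_csSup hbd this) (Nat.not_le_of_lt h)

lemma del_eq (h1 : x l ≤ w) (h2 : ¬ x (l+1) ≤ w) (hl : l ≤ k) : del x k w = l := by
  have hbd : BddAbove {l | l ≤ k ∧ x l ≤ w} := ⟨k, fun a ha => ha.1⟩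
  refine le_antisymm ?_ (le_csSup hbd (⟨hl, h1⟩ : l ∈ {l | l ≤ k ∧ x l ≤ w}))
  by_contra hc
  push_neg at hc
  have hne : Set.Nonempty {l | l ≤ k ∧ x l ≤ w} := ⟨l, hl, h1⟩
  have hm := Nat.sSup_mem hne ⟨k, fun a ha => ha.1⟩
  exact h2 (le_trans (x_le_x hpq hx0 hxk hcov hc hm.1) hm.2)

lemma del_lt_k (hw : MeetIrrIn (Set.Icc p q) w) : del x k w < k := by
  obtain ⟨t, ht, -⟩ := hw.2
  have hqw : ¬ x k ≤ w := by
    rw [hxk]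
    intro hc
    exact absurd (lt_of_lt_of_le ht.2.2.1 (le_trans ht.2.1.2 hc)) (lt_irrefl _)
  rcases lt_or_eq_of_le (del_le_k hpq hx0 hxk hcov hw.1 : del x k w ≤ k) with h | h
  · exact h
  · exact absurd (h ▸ x_del_le hpq hx0 hxk hcov hw.1) hqw

lemma del_surj (hl : l < k) :
    ∃ w, MeetIrrIn (Set.Icc p q) w ∧ x l ≤ w ∧ ¬ x (l+1) ≤ w ∧ del x k w = l := by
  obtain ⟨w, hw, hwle, hwnle⟩ := exists_meetIrr_witness
    ((x_mem hpq hx0 hxk hcov hl).2) (x_mem hpq hx0 hxk hcov hl.le) (not_le_of_gt (hcov l hl).2.2.1)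
  exact ⟨w, hw, hwle, hwnle, del_eq hpq hx0 hxk hcov hwle hwnle hl.le⟩

lemma del_inj (hM : {y | MeetIrrIn (Set.Icc p q) y}.ncard = k)
    (hj : MeetIrrIn (Set.Icc p q) j) (hw : MeetIrrIn (Set.Icc p q) w)
    (hjw : del x k j = del x k w) : j = w := by
  classical
  refine Set.inj_on_of_surj_on_of_ncard_le (s := {y | MeetIrrIn (Set.Icc p q) y})
    (t := ↑(Finset.range k)) (fun a _ => del x k a) ?_ ?_ ?_ hj hw hjw (Set.toFinite _)
  · intro a ha
    simp only [Finset.coe_range, Set.mem_Iio]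
    exact del_lt_k hpq hx0 hxk hcov ha
  · intro b hb
    simp only [Finset.coe_range, Set.mem_Iio] at hb
    obtain ⟨w', hw', -, -, hdel⟩ := del_surj hpq hx0 hxk hcov hb
    exact ⟨w', hw', hdel⟩
  · rw [hM, Set.ncard_coe_finset, Finset.card_range]

end Chain
end Lower
end TrimProof
namespace TrimProof
section Lower
variable {α : Type*} [Lattice α] [Fintype α]

/-- The projected chain in the lower interval. -/
def aCh (x : ℕ → α) (v : α) (l : ℕ) : α := x l ⊓ v

open Classical in
/-- Jump set of the projected chain. -/
noncomputable def jumps (x : ℕ → α) (v : α) (n : ℕ) : Finset ℕ :=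
  Finset.filter (fun l => aCh x v l ≠ aCh x v (l+1)) (Finset.range n)

open Classical in
/-- The deduplicated projected chain, as a list. -/
noncomputable def achain (x : ℕ → α) (v : α) : ℕ → List α
  | 0 => [aCh x v 0]
  | (n+1) => if aCh x v n = aCh x v (n+1) then achain x v n
      else achain x v n ++ [aCh x v (n+1)]

variable {p q v w j t y z : α} {k l : ℕ} {x : ℕ → α}

section AChain
variable (hpq : p ≤ q) (hx0 : x 0 = p) (hxk : x k = q)
  (hcov : ∀ l, l < k → CovByIn (Set.Icc p q) (x l) (x (l+1)))
  (hpv : p ≤ v) (hvq : v ≤ q)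
  (hlm : ∀ l, l ≤ k → LeftModularIn (Set.Icc p q) (x l))

include hpq hx0 hxk hcov hpv

lemma a_mem (h : l ≤ k) : aCh x v l ∈ Set.Icc p v :=
  ⟨le_inf (x_mem hpq hx0 hxk hcov h).1 hpv, inf_le_right⟩

lemma a_zero : aCh x v 0 = p := by
  rw [aCh, hx0]; exact inf_eq_left.mpr hpv

omit hpv in
lemma a_last (hvq : v ≤ q) : aCh x v k = v := by
  rw [aCh, hxk]; exact inf_eq_right.mpr hvq

lemma a_le_a {a b : ℕ} (hab : a ≤ b) (hbk : b ≤ k) : aCh x v a ≤ aCh x v b :=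
  inf_le_inf_right v (x_le_x hpq hx0 hxk hcov hab hbk)

lemma a_le_x (h : l ≤ k) : aCh x v l ≤ x l := inf_le_left

include hvq hlm

/-- The projected chain has no gaps. -/
lemma a_eq_or_eq (hl : l < k) (ht : t ∈ Set.Icc p v)
    (h1 : aCh x v l ≤ t) (h2 : t ≤ aCh x v (l+1)) :
    t = aCh x v l ∨ t = aCh x v (l+1) := by
  have htS : t ∈ Set.Icc p q := ⟨ht.1, le_trans ht.2 hvq⟩
  have hvS : v ∈ Set.Icc p q := ⟨le_trans ht.1 ht.2, hvq⟩
  have hsub : t ⊔ x l ∈ Set.Icc p q := icc_sup_mem htS (x_mem hpq hx0 hxk hcov hl.le)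
  have hxl : x l ≤ t ⊔ x l := le_sup_right
  have hxl1 : t ⊔ x l ≤ x (l+1) :=
    sup_le (le_trans h2 (le_trans (a_le_x hpq hx0 hxk hcov hpv hl) le_rfl))
      (x_le_x hpq hx0 hxk hcov (Nat.le_succ l) hl)
  have hcases : t ⊔ x l = x l ∨ t ⊔ x l = x (l+1) := by
    rcases eq_or_lt_of_le hxl with h | h
    · exact Or.inl h.symm
    · rcases eq_or_lt_of_le hxl1 with h' | h'
      · exact Or.inr h'
      · exact absurd ⟨t ⊔ x l, hsub, h, h'⟩ (hcov l hl).2.2.2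
  rcases hcases with h | h
  · left
    have : t ≤ x l := le_trans le_sup_left h.le
    exact le_antisymm (le_inf this ht.2) h1
  · rcases eq_or_lt_of_le ht.2 with hv | hv
    · right
      exact le_antisymm h2 (by rw [hv]; exact inf_le_right)
    · right
      have hlmx := (hlm l hl.le).2 t htS v hvS hv
      have heq : aCh x v (l+1) = t ⊔ aCh x v l := by
        show x (l+1) ⊓ v = _
        rw [← h, hlmx]
        rfl
      exact le_antisymm h2 (by rw [heq]; exact sup_le le_rfl h1)

lemma a_leftmod (hl : l ≤ k) : LeftModularIn (Set.Icc p v) (aCh x v l) := by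
  refine ⟨a_mem hpq hx0 hxk hcov hpv hl, fun y hy z hz hyz => ?_⟩
  have hyS : y ∈ Set.Icc p q := ⟨hy.1, le_trans hy.2 hvq⟩
  have hzS : z ∈ Set.Icc p q := ⟨hz.1, le_trans hz.2 hvq⟩
  have e1 : x l ⊓ z = aCh x v l ⊓ z := by
    rw [aCh, inf_assoc, inf_comm v z, inf_eq_left.mpr hz.2]
  have e2 := (hlm l hl).2 y hyS z hzS hyz
  refine le_antisymm ?_ ?_
  · calc (y ⊔ aCh x v l) ⊓ z ≤ (y ⊔ x l) ⊓ z :=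
          inf_le_inf_right z (sup_le_sup_left (a_le_x hpq hx0 hxk hcov hpv hl) y)
      _ = y ⊔ (x l ⊓ z) := e2
      _ = y ⊔ (aCh x v l ⊓ z) := by rw [e1]
  · exact le_inf (sup_le le_sup_left (le_trans inf_le_left le_sup_right))
      (sup_le hyz.le inf_le_right)

/-- Consecutive distinct values of the projected chain form a cover in `Icc p v`. -/
lemma a_covByIn (hl : l < k) (hne : aCh x v l ≠ aCh x v (l+1)) :
    CovByIn (Set.Icc p v) (aCh x v l) (aCh x v (l+1)) := by
  refine ⟨a_mem hpq hx0 hxk hcov hpv hl.le, a_mem hpq hx0 hxk hcov hpv hl,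
    lt_of_le_of_ne (a_le_a hpq hx0 hxk hcov hpv (Nat.le_succ l) hl) hne, ?_⟩
  rintro ⟨c, hc, h1, h2⟩
  rcases a_eq_or_eq hpq hx0 hxk hcov hpv hvq hlm hl hc h1.le h2.le with h | h
  · exact absurd h.symm (ne_of_lt h1)
  · exact absurd h (ne_of_lt h2)

end AChain
end Lower
end TrimProof
namespace TrimProof
section Lower
variable {α : Type*} [Lattice α] [Fintype α]
variable {p q v w j t y z : α} {k l n : ℕ} {x : ℕ → α}

lemma achain_ne_nil : achain x v n ≠ [] := by
  induction n with
  | zero => simp [achain]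
  | succ n ih =>
    simp only [achain]
    split_ifs
    · exact ih
    · simp

lemma achain_getLast : (achain x v n).getLast? = some (aCh x v n) := by
  induction n with
  | zero => simp [achain]
  | succ n ih =>
    simp only [achain]
    split_ifs with h
    · rw [ih, h]
    · exact List.getLast?_concat

lemma achain_head : (achain x v n).head? = some (aCh x v 0) := by
  induction n with
  | zero => simp [achain]
  | succ n ih =>
    simp only [achain]
    split_ifs with h
    · exact ih
    · cases hc : achain x v n with
      | nil => exact absurd hc achain_ne_nil
      | cons a l => rw [hc] at ih; simpa using ih

open Classical in
lemma achain_length : (achain x v n).length = (jumps x v n).card + 1 := by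
  induction n with
  | zero => simp [achain, jumps]
  | succ n ih =>
    by_cases h : aCh x v n = aCh x v (n+1)
    · rw [show achain x v (n+1) = achain x v n from by simp only [achain]; rw [if_pos h], ih]
      congr 2
      unfold jumps
      rw [Finset.range_add_one, Finset.filter_insert, if_neg (by simp [h])]
    · rw [show achain x v (n+1) = achain x v n ++ [aCh x v (n+1)] from by
        simp only [achain]; rw [if_neg h]]
      rw [List.length_append, List.length_singleton, ih]
      unfold jumps
      rw [Finset.range_add_one, Finset.filter_insert, if_pos (by simp [h]),
        Finset.card_insert_of_notMem (by simp)]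

lemma achain_mem (hy : y ∈ achain x v n) : ∃ l, l ≤ n ∧ y = aCh x v l := by
  induction n with
  | zero =>
    simp only [achain, List.mem_singleton] at hy
    exact ⟨0, le_rfl, hy⟩
  | succ n ih =>
    simp only [achain] at hy
    split_ifs at hy with h
    · obtain ⟨l, hl, hy⟩ := ih hy
      exact ⟨l, le_trans hl (Nat.le_succ n), hy⟩
    · rcases List.mem_append.mp hy with hy | hy
      · obtain ⟨l, hl, hy⟩ := ih hy
        exact ⟨l, le_trans hl (Nat.le_succ n), hy⟩
      · exact ⟨n+1, le_rfl, List.mem_singleton.mp hy⟩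

section AChain2
variable (hpq : p ≤ q) (hx0 : x 0 = p) (hxk : x k = q)
  (hcov : ∀ l, l < k → CovByIn (Set.Icc p q) (x l) (x (l+1)))
  (hpv : p ≤ v) (hvq : v ≤ q)
  (hlm : ∀ l, l ≤ k → LeftModularIn (Set.Icc p q) (x l))

include hpq hx0 hxk hcov hpv hvq hlm

lemma achain_chain' (hn : n ≤ k) : (achain x v n).Chain' (CovByIn (Set.Icc p v)) := by
  induction n with
  | zero => simp only [achain]; exact List.isChain_singleton _
  | succ n ih =>
    simp only [achain]
    split_ifs with h
    · exact ih (le_trans (Nat.le_succ n) hn)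
    · unfold List.Chain'; rw [List.isChain_append]
      refine ⟨ih (le_trans (Nat.le_succ n) hn), List.isChain_singleton _, ?_⟩
      intro a ha b hb
      rw [achain_getLast] at ha
      simp only [List.head?_cons, Option.mem_def, Option.some.injEq] at ha hb
      rw [← ha, ← hb]
      exact a_covByIn hpq hx0 hxk hcov hpv hvq hlm (Nat.lt_of_succ_le hn) h

lemma achain_isCoverChain (hn : n ≤ k) : IsCoverChain (Set.Icc p v) (achain x v n) := by
  refine ⟨achain_chain' hpq hx0 hxk hcov hpv hvq hlm hn, fun y hy => ?_⟩
  obtain ⟨l, hl, rfl⟩ := achain_mem hy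
  exact a_mem hpq hx0 hxk hcov hpv (le_trans hl hn)

end AChain2
end Lower
end TrimProof
namespace TrimProof
section Bound
variable {α : Type*} [Lattice α] [Fintype α] {p q : α}

lemma list_get_mono {d : List α} (hc : d.Chain' (CovByIn (Set.Icc p q))) :
    ∀ {a b : ℕ} (hab : a ≤ b) (hb : b < d.length),
      d.get ⟨a, lt_of_le_of_lt hab hb⟩ ≤ d.get ⟨b, hb⟩ := by
  intro a b hab hb
  induction b with
  | zero => simp [Nat.le_zero.mp hab]
  | succ n ih =>
    rcases Nat.lt_or_ge a (n+1) with h | h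
    · refine le_trans (ih (Nat.lt_succ_iff.mp h) (by omega)) ?_
      exact (List.isChain_iff_getElem.mp hc n (by omega)).2.2.1.le
    · have : a = n + 1 := le_antisymm hab h
      subst this
      rfl

lemma coverChain_length_le_join {d : List α} (hd : IsCoverChain (Set.Icc p q) d) :
    d.length ≤ {y | JoinIrrIn (Set.Icc p q) y}.ncard + 1 := by
  classical
  rcases d.eq_nil_or_concat with rfl | ⟨-, -, -⟩
  · simp
  have hex : ∀ (i : ℕ) (_ : i + 1 < d.length), ∃ j, JoinIrrIn (Set.Icc p q) j ∧
      j ≤ d.get ⟨i+1, by omega⟩ ∧ ¬ j ≤ d.get ⟨i, by omega⟩ := by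
    intro i hi
    have hcv := List.isChain_iff_getElem.mp hd.1 i (by omega)
    exact exists_joinIrr_witness hcv.1.1 hcv.2.1 (not_le_of_gt hcv.2.2.1)
  set f : ℕ → α := fun i => if h : i + 1 < d.length then Classical.choose (hex i h) else p
    with hf
  have hcard : d.length - 1 ≤ {y | JoinIrrIn (Set.Icc p q) y}.toFinset.card := by
    have := Finset.card_le_card_of_injOn f ?_ ?_ (s := Finset.range (d.length - 1))
      (t := {y | JoinIrrIn (Set.Icc p q) y}.toFinset)
    · simpa using this
    · intro i hi
      simp only [Finset.mem_coe, Finset.mem_range] at hi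
      have h : i + 1 < d.length := by omega
      simp only [hf, dif_pos h, Finset.mem_coe, Set.mem_toFinset]
      exact (Classical.choose_spec (hex i h)).1
    · intro i hi i' hi' hii'
      simp only [Finset.mem_coe, Finset.mem_range] at hi hi'
      have h : i + 1 < d.length := by omega
      have h' : i' + 1 < d.length := by omega
      simp only [hf, dif_pos h, dif_pos h'] at hii'
      by_contra hne
      rcases Nat.lt_or_ge i i' with hlt | hge
      · have hle : Classical.choose (hex i h) ≤ d.get ⟨i', by omega⟩ :=
          le_trans (Classical.choose_spec (hex i h)).2.1
            (list_get_mono hd.1 (by omega : i + 1 ≤ i') (by omega))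
        rw [hii'] at hle
        exact (Classical.choose_spec (hex i' h')).2.2 hle
      · have hlt : i' < i := by omega
        have hle : Classical.choose (hex i' h') ≤ d.get ⟨i, by omega⟩ :=
          le_trans (Classical.choose_spec (hex i' h')).2.1
            (list_get_mono hd.1 (by omega : i' + 1 ≤ i) (by omega))
        rw [← hii'] at hle
        exact (Classical.choose_spec (hex i h)).2.2 hle
  rw [Set.ncard_eq_toFinset_card']
  omega

lemma coverChain_length_le_meet {d : List α} (hd : IsCoverChain (Set.Icc p q) d) :
    d.length ≤ {y | MeetIrrIn (Set.Icc p q) y}.ncard + 1 := by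
  classical
  rcases d.eq_nil_or_concat with rfl | ⟨-, -, -⟩
  · simp
  have hex : ∀ (i : ℕ) (_ : i + 1 < d.length), ∃ w, MeetIrrIn (Set.Icc p q) w ∧
      d.get ⟨i, by omega⟩ ≤ w ∧ ¬ d.get ⟨i+1, by omega⟩ ≤ w := by
    intro i hi
    have hcv := List.isChain_iff_getElem.mp hd.1 i (by omega)
    exact exists_meetIrr_witness hcv.2.1.2 hcv.1 (not_le_of_gt hcv.2.2.1)
  set f : ℕ → α := fun i => if h : i + 1 < d.length then Classical.choose (hex i h) else p
    with hf
  have hcard : d.length - 1 ≤ {y | MeetIrrIn (Set.Icc p q) y}.toFinset.card := by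
    have := Finset.card_le_card_of_injOn f ?_ ?_ (s := Finset.range (d.length - 1))
      (t := {y | MeetIrrIn (Set.Icc p q) y}.toFinset)
    · simpa using this
    · intro i hi
      simp only [Finset.mem_coe, Finset.mem_range] at hi
      have h : i + 1 < d.length := by omega
      simp only [hf, dif_pos h, Finset.mem_coe, Set.mem_toFinset]
      exact (Classical.choose_spec (hex i h)).1
    · intro i hi i' hi' hii'
      simp only [Finset.mem_coe, Finset.mem_range] at hi hi'
      have h : i + 1 < d.length := by omega
      have h' : i' + 1 < d.length := by omega
      simp only [hf, dif_pos h, dif_pos h'] at hii'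
      by_contra hne
      rcases Nat.lt_or_ge i i' with hlt | hge
      · have hle : d.get ⟨i+1, by omega⟩ ≤ Classical.choose (hex i' h') :=
          le_trans (list_get_mono hd.1 (by omega : i + 1 ≤ i') (by omega))
            (Classical.choose_spec (hex i' h')).2.1
        rw [← hii'] at hle
        exact (Classical.choose_spec (hex i h)).2.2 hle
      · have hlt : i' < i := by omega
        have hle : d.get ⟨i'+1, by omega⟩ ≤ Classical.choose (hex i h) :=
          le_trans (list_get_mono hd.1 (by omega : i' + 1 ≤ i) (by omega))
            (Classical.choose_spec (hex i h)).2.1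
        rw [hii'] at hle
        exact (Classical.choose_spec (hex i' h')).2.2 hle
  rw [Set.ncard_eq_toFinset_card']
  omega

end Bound
end TrimProof
namespace TrimProof
section Count
variable {α : Type*} [Lattice α] [Fintype α]
variable {p q v w j t y z : α} {k l n : ℕ} {x : ℕ → α}

/-- Lower covers are the same in `Icc p v` and in `Icc p q`. -/
lemma covByIn_lower_iff (hvq : v ≤ q) (hj : j ∈ Set.Icc p v) :
    CovByIn (Set.Icc p v) y j ↔ CovByIn (Set.Icc p q) y j := by
  constructor
  · rintro ⟨hy, -, hlt, hni⟩
    refine ⟨⟨hy.1, le_trans hy.2 hvq⟩, ⟨hj.1, le_trans hj.2 hvq⟩, hlt, ?_⟩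
    rintro ⟨c, hc, h1, h2⟩
    exact hni ⟨c, ⟨hc.1, le_trans h2.le hj.2⟩, h1, h2⟩
  · rintro ⟨hy, -, hlt, hni⟩
    refine ⟨⟨hy.1, le_trans hlt.le hj.2⟩, hj, hlt, ?_⟩
    rintro ⟨c, hc, h1, h2⟩
    exact hni ⟨c, ⟨hc.1, le_trans hc.2 hvq⟩, h1, h2⟩

lemma joinIrrIn_lower_iff (hpv : p ≤ v) (hvq : v ≤ q) :
    JoinIrrIn (Set.Icc p v) j ↔ JoinIrrIn (Set.Icc p q) j ∧ j ≤ v := by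
  constructor
  · rintro ⟨hj, y, hy, huniq⟩
    rw [covByIn_lower_iff hvq hj] at hy
    refine ⟨⟨⟨hj.1, le_trans hj.2 hvq⟩, y, hy, ?_⟩, hj.2⟩
    intro y' hy'
    exact huniq y' ((covByIn_lower_iff hvq hj).mpr hy')
  · rintro ⟨⟨hj, y, hy, huniq⟩, hjv⟩
    have hjm : j ∈ Set.Icc p v := ⟨hj.1, hjv⟩
    refine ⟨hjm, y, (covByIn_lower_iff hvq hjm).mpr hy, ?_⟩
    intro y' hy'
    exact huniq y' ((covByIn_lower_iff hvq hjm).mp hy')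

section CountJ
variable (hpq : p ≤ q) (hx0 : x 0 = p) (hxk : x k = q)
  (hcov : ∀ l, l < k → CovByIn (Set.Icc p q) (x l) (x (l+1)))
  (hpv : p ≤ v) (hvq : v ≤ q)
  (hlm : ∀ l, l ≤ k → LeftModularIn (Set.Icc p q) (x l))
  (hJ : {y | JoinIrrIn (Set.Icc p q) y}.ncard = k)

include hpq hx0 hxk hcov hpv hvq hlm hJ

lemma joinIrr_count_lower :
    {y | JoinIrrIn (Set.Icc p v) y}.ncard = (jumps x v k).card := by
  classical
  rw [Set.ncard_eq_toFinset_card']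
  refine Finset.card_bij (fun a _ => gam x a - 1) ?_ ?_ ?_
  · intro a ha
    rw [Set.mem_toFinset] at ha
    obtain ⟨haS, hav⟩ := (joinIrrIn_lower_iff hpv hvq).mp ha
    have h1 : 1 ≤ gam x a := gam_pos hpq hx0 hxk hcov haS
    have hk : gam x a ≤ k := gam_le_k hpq hx0 hxk hcov haS.1.2
    have hgam : gam x a - 1 + 1 = gam x a := by omega
    refine Finset.mem_filter.mpr ⟨Finset.mem_range.mpr (by show gam x a - 1 < k; omega), ?_⟩
    intro heq
    have hja : a ≤ aCh x v (gam x a - 1 + 1) := by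
      rw [hgam]
      exact le_inf (le_x_gam hpq hx0 hxk hcov haS.1.2) hav
    rw [← heq] at hja
    exact not_le_x_of_lt_gam hpq hx0 hxk hcov (by omega : gam x a - 1 < gam x a)
      (le_trans hja inf_le_left)
  · intro a ha a' ha' heq
    rw [Set.mem_toFinset] at ha ha'
    obtain ⟨haS, -⟩ := (joinIrrIn_lower_iff hpv hvq).mp ha
    obtain ⟨haS', -⟩ := (joinIrrIn_lower_iff hpv hvq).mp ha'
    have h1 : 1 ≤ gam x a := gam_pos hpq hx0 hxk hcov haS
    have h1' : 1 ≤ gam x a' := gam_pos hpq hx0 hxk hcov haS'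
    have heq' : gam x a - 1 = gam x a' - 1 := heq
    exact gam_inj hpq hx0 hxk hcov hJ haS haS' (by omega)
  · intro b hb
    obtain ⟨hbr, hbne⟩ := Finset.mem_filter.mp hb
    rw [Finset.mem_range] at hbr
    have hne : ¬ aCh x v (b+1) ≤ aCh x v b := fun hc =>
      hbne (le_antisymm (a_le_a hpq hx0 hxk hcov hpv (Nat.le_succ b) hbr) hc)
    obtain ⟨j', hj', hle, hnle⟩ := exists_joinIrr_witness
      (a_mem hpq hx0 hxk hcov hpv hbr.le).1 (a_mem hpq hx0 hxk hcov hpv hbr) hne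
    have hj'S := (joinIrrIn_lower_iff hpv hvq).mp hj'
    have hgam : gam x j' = b + 1 := by
      refine gam_eq hpq hx0 hxk hcov (le_trans hle inf_le_left) ?_ hbr
      intro hc
      exact hnle (le_inf hc hj'.1.2)
    exact ⟨j', Set.mem_toFinset.mpr hj', by show gam x j' - 1 = b; omega⟩

end CountJ
end Count
end TrimProof
namespace TrimProof
section CountM
variable {α : Type*} [Lattice α] [Fintype α]
variable {p q v w j t y z : α} {k l n : ℕ} {x : ℕ → α}

section CM
variable (hpq : p ≤ q) (hx0 : x 0 = p) (hxk : x k = q)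
  (hcov : ∀ l, l < k → CovByIn (Set.Icc p q) (x l) (x (l+1)))
  (hpv : p ≤ v) (hvq : v ≤ q)
  (hlm : ∀ l, l ≤ k → LeftModularIn (Set.Icc p q) (x l))

include hpq hx0 hxk hcov hpv hvq hlm

/-- Representation of a meet-irreducible of the lower interval `Icc p v`:
it is `w ⊓ v` for a meet-irreducible `w` of `Icc p q` whose label matches. -/
lemma meetIrr_lower_rep (hz : MeetIrrIn (Set.Icc p v) z) :
    ∃ i w', i < k ∧ aCh x v i ≠ aCh x v (i+1) ∧ i = del (aCh x v) k z ∧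
      MeetIrrIn (Set.Icc p q) w' ∧ del x k w' = i ∧ w' ⊓ v = z := by
  obtain ⟨t, ht, huniq⟩ := hz.2
  have hzv : z ≤ v := hz.1.2
  have hvnz : ¬ v ≤ z := fun hc =>
    absurd (lt_of_lt_of_le ht.2.2.1 (le_trans ht.2.1.2 hc)) (lt_irrefl _)
  have hzS : z ∈ Set.Icc p q := ⟨hz.1.1, le_trans hzv hvq⟩
  have hzltv : z < v := lt_of_le_of_ne hzv (fun h => hvnz h.symm.le)
  -- the label i of z along the projected chain
  have hidef : del (aCh x v) k z = sSup {l | l ≤ k ∧ aCh x v l ≤ z} := rfl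
  set i := sSup {l | l ≤ k ∧ aCh x v l ≤ z} with hiS
  have hne : Set.Nonempty {l | l ≤ k ∧ aCh x v l ≤ z} :=
    ⟨0, Nat.zero_le k, by rw [a_zero hpq hx0 hxk hcov hpv]; exact hz.1.1⟩
  have hbd : BddAbove {l | l ≤ k ∧ aCh x v l ≤ z} := ⟨k, fun a ha => ha.1⟩
  obtain ⟨hik, haiz⟩ := Nat.sSup_mem hne hbd
  have hikk : i < k := by
    rcases lt_or_eq_of_le (hik : i ≤ k) with h | h
    · exact h
    · rw [h] at haiz
      rw [a_last hpq hx0 hxk hcov hvq] at haiz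
      exact absurd haiz hvnz
  have hanz : ¬ aCh x v (i+1) ≤ z := by
    intro hc
    have : i + 1 ∈ {l | l ≤ k ∧ aCh x v l ≤ z} := ⟨hikk, hc⟩
    exact absurd (le_csSup hbd this) (by rw [← hiS]; omega)
  have hjump : aCh x v i ≠ aCh x v (i+1) := fun h => hanz (h ▸ haiz)
  -- the unique cover of z in `Icc p v` is z ⊔ a (i+1)
  have hcand : CovByIn (Set.Icc p v) z (z ⊔ aCh x v (i+1)) := by
    refine ⟨hz.1, icc_sup_mem hz.1 (a_mem hpq hx0 hxk hcov hpv hikk), ?_, ?_⟩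
    · exact lt_of_le_of_ne le_sup_left (fun h => hanz (sup_eq_left.mp h.symm))
    · rintro ⟨t', ht', h1, h2⟩
      have hinf1 : aCh x v i ≤ t' ⊓ aCh x v (i+1) :=
        le_inf (le_trans haiz h1.le) (a_le_a hpq hx0 hxk hcov hpv (Nat.le_succ i) hikk)
      have hmem : t' ⊓ aCh x v (i+1) ∈ Set.Icc p v :=
        icc_inf_mem ht' (a_mem hpq hx0 hxk hcov hpv hikk)
      rcases a_eq_or_eq hpq hx0 hxk hcov hpv hvq hlm hikk hmem hinf1 inf_le_right
        with hca | hca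
      · -- t' ⊓ a(i+1) = a i : left-modularity forces t' = z
        have hlmod := (a_leftmod (l := i+1) hpq hx0 hxk hcov hpv hvq hlm hikk).2 z hz.1 t' ht' h1
        rw [inf_comm (aCh x v (i+1)) t'] at hlmod
        rw [hca] at hlmod
        have : (z ⊔ aCh x v (i+1)) ⊓ t' = t' := inf_eq_right.mpr h2.le
        rw [this] at hlmod
        have : t' = z := by rw [hlmod, sup_eq_left.mpr haiz]
        exact absurd this (ne_of_gt h1)
      · -- t' ⊓ a(i+1) = a (i+1) : then t' is the top of the step
        have : aCh x v (i+1) ≤ t' := by rw [← hca]; exact inf_le_left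
        exact absurd (sup_le h1.le this) (not_le_of_gt h2)
  have hstar : z ⊔ aCh x v (i+1) = t := huniq _ hcand
  -- x (i+1) is not below z ⊔ x i
  have hxi1 : ¬ x (i+1) ≤ z ⊔ x i := by
    intro hc
    have hv2 : aCh x v (i+1) ≤ (z ⊔ x i) ⊓ v := le_inf (le_trans inf_le_left hc) inf_le_right
    have hlmx := (hlm i hikk.le).2 z hzS v ⟨hpv, hvq⟩ hzltv
    rw [hlmx] at hv2
    have : aCh x v (i+1) ≤ z := le_trans hv2 (sup_le le_rfl haiz)
    exact hanz this
  obtain ⟨w', hw', hle, hnle⟩ := exists_meetIrr_witness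
    (x_mem hpq hx0 hxk hcov hikk).2
    (icc_sup_mem hzS (x_mem hpq hx0 hxk hcov hikk.le)) hxi1
  have hdel : del x k w' = i :=
    del_eq hpq hx0 hxk hcov (le_trans le_sup_right hle) hnle hikk.le
  refine ⟨i, w', hikk, hjump, by rw [hidef], hw', hdel, ?_⟩
  -- w' ⊓ v = z
  have hzle : z ≤ w' ⊓ v := le_inf (le_trans le_sup_left hle) hzv
  refine le_antisymm ?_ hzle
  by_contra hc
  have hmem : w' ⊓ v ∈ Set.Icc p v := ⟨le_trans hz.1.1 hzle, inf_le_right⟩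
  have hlt : z < w' ⊓ v := lt_of_le_of_ne hzle (fun h => hc (h ▸ le_rfl))
  have hcle : t ≤ w' ⊓ v := meetIrr_cover_le hz ht hmem hlt
  have haw : aCh x v (i+1) ≤ w' :=
    le_trans (le_trans le_sup_right (hstar ▸ hcle)) inf_le_left
  -- x(i+1) ⊓ w' = x i by gaplessness of the chain in Icc p q
  have hxinf : x (i+1) ⊓ w' = x i := by
    have hle1 : x i ≤ x (i+1) ⊓ w' :=
      le_inf ((hcov i hikk).2.2.1.le) (le_trans le_sup_right hle)
    have hle2 : x (i+1) ⊓ w' ≤ x (i+1) := inf_le_left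
    have hne2 : x (i+1) ⊓ w' ≠ x (i+1) := fun h =>
      hnle (le_trans (le_of_eq h.symm) inf_le_right)
    rcases eq_or_lt_of_le hle1 with h | h
    · exact h.symm
    · exact absurd (⟨x (i+1) ⊓ w', icc_inf_mem (x_mem hpq hx0 hxk hcov hikk) hw'.1,
        h, lt_of_le_of_ne hle2 hne2⟩ : ∃ c ∈ Set.Icc p q, x i < c ∧ c < x (i+1))
        (hcov i hikk).2.2.2
  have : aCh x v (i+1) ≤ aCh x v i := by
    have h1 : aCh x v (i+1) ≤ x (i+1) ⊓ w' := le_inf inf_le_left haw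
    rw [hxinf] at h1
    exact le_inf h1 inf_le_right
  exact hanz (le_trans this haiz)

end CM
end CountM
end TrimProof
namespace TrimProof
section Assemble
variable {α : Type*} [Lattice α] [Fintype α]
variable {p q v w j t y z : α} {k l n : ℕ} {x : ℕ → α}

section CM2
variable (hpq : p ≤ q) (hx0 : x 0 = p) (hxk : x k = q)
  (hcov : ∀ l, l < k → CovByIn (Set.Icc p q) (x l) (x (l+1)))
  (hpv : p ≤ v) (hvq : v ≤ q)
  (hlm : ∀ l, l ≤ k → LeftModularIn (Set.Icc p q) (x l))

include hpq hx0 hxk hcov hpv hvq hlm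

lemma meetIrr_count_lower (hM : {y | MeetIrrIn (Set.Icc p q) y}.ncard = k) :
    {y | MeetIrrIn (Set.Icc p v) y}.ncard = (jumps x v k).card := by
  classical
  refine le_antisymm ?_ ?_
  · rw [Set.ncard_eq_toFinset_card']
    refine Finset.card_le_card_of_injOn (fun z => del (aCh x v) k z) ?_ ?_
    · intro z hzm
      rw [Finset.mem_coe, Set.mem_toFinset] at hzm
      obtain ⟨i, w', hik, hjump, hieq, -, -, -⟩ :=
        meetIrr_lower_rep hpq hx0 hxk hcov hpv hvq hlm hzm
      show del (aCh x v) k z ∈ jumps x v k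
      rw [← hieq]
      exact Finset.mem_filter.mpr ⟨Finset.mem_range.mpr hik, hjump⟩
    · intro z hzm z' hzm' heq
      rw [Finset.mem_coe, Set.mem_toFinset] at hzm hzm'
      obtain ⟨i, w1, hik, hjump, hieq, hw1, hdw1, hwz1⟩ :=
        meetIrr_lower_rep hpq hx0 hxk hcov hpv hvq hlm hzm
      obtain ⟨i', w2, hik', hjump', hieq', hw2, hdw2, hwz2⟩ :=
        meetIrr_lower_rep hpq hx0 hxk hcov hpv hvq hlm hzm'
      have hii : i = i' := by
        rw [hieq, hieq']
        exact heq
      have hww : w1 = w2 := del_inj hpq hx0 hxk hcov hM hw1 hw2 (by rw [hdw1, hdw2, hii])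
      rw [← hwz1, ← hwz2, hww]
  · have h1 := coverChain_length_le_meet
      (achain_isCoverChain hpq hx0 hxk hcov hpv hvq hlm (le_refl k))
    rw [achain_length] at h1
    omega

end CM2

/-- Main lemma: the lower interval of a trim interval is trim. -/
lemma isTrimIn_lower {p q v : α} {k : ℕ} (hpq : p ≤ q)
    (h : IsTrimIn (Set.Icc p q) p q k) (hpv : p ≤ v) (hvq : v ≤ q) :
    ∃ m, IsTrimIn (Set.Icc p v) p v m := by
  classical
  obtain ⟨⟨c, hcchain, hhead, hlast, hlen, hclm⟩, hbound, hJ, hM⟩ := h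
  set x : ℕ → α := fun l => c.getD l p with hxdef
  have hlenpos : 0 < c.length := by rw [hlen]; omega
  have hgetd : ∀ l (h : l < c.length), x l = c.get ⟨l, h⟩ := by
    intro l h
    simp only [hxdef, List.getD_eq_getElem?_getD, List.getElem?_eq_getElem h,
      Option.getD_some, List.get_eq_getElem]
  have hx0 : x 0 = p := by
    rw [hgetd 0 hlenpos]
    rw [List.head?_eq_getElem?, List.getElem?_eq_getElem hlenpos] at hhead
    have := Option.some_injective _ hhead
    simpa using this

  have hxk : x k = q := by
    have hk : k < c.length := by omega
    rw [hgetd k hk]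
    rw [List.getLast?_eq_getElem?] at hlast
    have : c.length - 1 = k := by omega
    rw [this, List.getElem?_eq_getElem hk] at hlast
    have := Option.some_injective _ hlast
    simpa using this
  have hcov : ∀ l, l < k → CovByIn (Set.Icc p q) (x l) (x (l+1)) := by
    intro l hl
    have h1 : l < c.length := by omega
    have h2 : l + 1 < c.length := by omega
    rw [hgetd l h1, hgetd (l+1) h2]
    exact List.isChain_iff_getElem.mp hcchain.1 l (by omega)
  have hlm : ∀ l, l ≤ k → LeftModularIn (Set.Icc p q) (x l) := by
    intro l hl
    have h1 : l < c.length := by omega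
    rw [hgetd l h1]
    exact hclm _ (List.get_mem _ _)
  refine ⟨(jumps x v k).card, ⟨achain x v k, achain_isCoverChain hpq hx0 hxk hcov hpv hvq hlm
    (le_refl k), ?_, ?_, achain_length, ?_⟩, ?_, joinIrr_count_lower hpq hx0 hxk hcov hpv hvq hlm hJ,
    meetIrr_count_lower hpq hx0 hxk hcov hpv hvq hlm hM⟩
  · rw [achain_head, a_zero hpq hx0 hxk hcov hpv]
  · rw [achain_getLast, a_last hpq hx0 hxk hcov hvq]
  · intro y hy
    obtain ⟨l, hl, rfl⟩ := achain_mem hy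
    exact a_leftmod hpq hx0 hxk hcov hpv hvq hlm hl
  · intro d hd _ _
    have := coverChain_length_le_join hd
    rw [joinIrr_count_lower hpq hx0 hxk hcov hpv hvq hlm hJ] at this
    exact this

end Assemble
end TrimProof
namespace TrimProof
section Dual
open OrderDual
variable {α : Type*} [Lattice α] {S : Set α} {u v m : α} {k : ℕ}

lemma covByIn_dual {a b : α} :
    CovByIn (ofDual ⁻¹' S) (toDual b) (toDual a) ↔ CovByIn S a b := by
  constructor
  · rintro ⟨h1, h2, h3, h4⟩
    refine ⟨h2, h1, h3, ?_⟩
    rintro ⟨c, hc, hc1, hc2⟩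
    exact h4 ⟨toDual c, hc, hc2, hc1⟩
  · rintro ⟨h1, h2, h3, h4⟩
    refine ⟨h2, h1, h3, ?_⟩
    rintro ⟨c, hc, hc1, hc2⟩
    exact h4 ⟨ofDual c, hc, hc2, hc1⟩

lemma leftModularIn_dual (h : LeftModularIn S m) :
    LeftModularIn (ofDual ⁻¹' S) (toDual m) := by
  refine ⟨h.1, fun y hy z hz hyz => ?_⟩
  have hlm := h.2 (ofDual z) hz (ofDual y) hy hyz
  show (ofDual y ⊓ m) ⊔ ofDual z = ofDual y ⊓ (m ⊔ ofDual z)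
  calc (ofDual y ⊓ m) ⊔ ofDual z = ofDual z ⊔ (m ⊓ ofDual y) := by
        rw [sup_comm, inf_comm]
    _ = (ofDual z ⊔ m) ⊓ ofDual y := hlm.symm
    _ = ofDual y ⊓ (m ⊔ ofDual z) := by rw [inf_comm, sup_comm]

lemma leftModularIn_of_dual (h : LeftModularIn (ofDual ⁻¹' S) (toDual m)) :
    LeftModularIn S m := by
  refine ⟨h.1, fun y hy z hz hyz => ?_⟩
  have hlm := h.2 (toDual z) hz (toDual y) hy hyz
  have hlm' : (z ⊓ m) ⊔ y = z ⊓ (m ⊔ y) := hlm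
  calc (y ⊔ m) ⊓ z = z ⊓ (m ⊔ y) := by rw [inf_comm, sup_comm]
    _ = (z ⊓ m) ⊔ y := hlm'.symm
    _ = y ⊔ (m ⊓ z) := by rw [sup_comm, inf_comm]

lemma joinIrrIn_dual :
    JoinIrrIn (ofDual ⁻¹' S) (toDual m) ↔ MeetIrrIn S m := by
  constructor
  · rintro ⟨hm, y', hy', hu⟩
    exact ⟨hm, ofDual y', covByIn_dual.mp hy',
      fun y hy => congrArg ofDual (hu (toDual y) (covByIn_dual.mpr hy))⟩
  · rintro ⟨hm, y, hy, hu⟩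
    exact ⟨hm, toDual y, covByIn_dual.mpr hy,
      fun y' hy' => congrArg toDual (hu (ofDual y') (covByIn_dual.mp hy'))⟩

lemma meetIrrIn_dual :
    MeetIrrIn (ofDual ⁻¹' S) (toDual m) ↔ JoinIrrIn S m := by
  constructor
  · rintro ⟨hm, y', hy', hu⟩
    exact ⟨hm, ofDual y', covByIn_dual.mp hy',
      fun y hy => congrArg ofDual (hu (toDual y) (covByIn_dual.mpr hy))⟩
  · rintro ⟨hm, y, hy, hu⟩
    exact ⟨hm, toDual y, covByIn_dual.mpr hy,
      fun y' hy' => congrArg toDual (hu (ofDual y') (covByIn_dual.mp hy'))⟩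

lemma joinIrr_set_dual :
    {x' : αᵒᵈ | JoinIrrIn (ofDual ⁻¹' S) x'} = toDual '' {x | MeetIrrIn S x} := by
  ext x'
  simp only [Set.mem_setOf_eq, Set.mem_image]
  constructor
  · intro h
    exact ⟨ofDual x', joinIrrIn_dual.mp h, rfl⟩
  · rintro ⟨x, hx, rfl⟩
    exact joinIrrIn_dual.mpr hx

lemma meetIrr_set_dual :
    {x' : αᵒᵈ | MeetIrrIn (ofDual ⁻¹' S) x'} = toDual '' {x | JoinIrrIn S x} := by
  ext x'
  simp only [Set.mem_setOf_eq, Set.mem_image]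
  constructor
  · intro h
    exact ⟨ofDual x', meetIrrIn_dual.mp h, rfl⟩
  · rintro ⟨x, hx, rfl⟩
    exact meetIrrIn_dual.mpr hx

lemma isCoverChain_dual {c : List α} (h : IsCoverChain S c) :
    IsCoverChain (ofDual ⁻¹' S) ((c.map toDual).reverse) := by
  constructor
  · unfold List.Chain'; rw [List.isChain_reverse, List.isChain_map]
    exact List.IsChain.imp (fun a b hab => covByIn_dual.mpr hab) h.1
  · intro y hy
    simp only [List.mem_reverse, List.mem_map] at hy
    obtain ⟨a, ha, rfl⟩ := hy
    exact h.2 a ha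

lemma isCoverChain_of_dual {c' : List αᵒᵈ} (h : IsCoverChain (ofDual ⁻¹' S) c') :
    IsCoverChain S ((c'.map ofDual).reverse) := by
  constructor
  · unfold List.Chain'; rw [List.isChain_reverse, List.isChain_map]
    exact List.IsChain.imp (fun a b hab => covByIn_dual.mp hab) h.1
  · intro y hy
    simp only [List.mem_reverse, List.mem_map] at hy
    obtain ⟨a, ha, rfl⟩ := hy
    exact h.2 a ha

lemma isTrimIn_dual (h : IsTrimIn S u v k) :
    IsTrimIn (ofDual ⁻¹' S) (toDual v) (toDual u) k := by
  obtain ⟨⟨c, hc, hh, hl, hlen, hclm⟩, hb, hJ, hM⟩ := h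
  refine ⟨⟨(c.map toDual).reverse, isCoverChain_dual hc, ?_, ?_, ?_, ?_⟩, ?_, ?_, ?_⟩
  · rw [List.head?_reverse, List.getLast?_map, hl]; rfl
  · rw [List.getLast?_reverse, List.head?_map, hh]; rfl
  · rw [List.length_reverse, List.length_map, hlen]
  · intro y hy
    simp only [List.mem_reverse, List.mem_map] at hy
    obtain ⟨a, ha, rfl⟩ := hy
    exact leftModularIn_dual (hclm a ha)
  · intro c' hc' hh' hl'
    have hlen' := hb _ (isCoverChain_of_dual hc')
      (by rw [List.head?_reverse, List.getLast?_map, hl']; rfl)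
      (by rw [List.getLast?_reverse, List.head?_map, hh']; rfl)
    rw [List.length_reverse, List.length_map] at hlen'
    exact hlen'
  · rw [joinIrr_set_dual, Set.ncard_image_of_injective _ toDual.injective]
    exact hM
  · rw [meetIrr_set_dual, Set.ncard_image_of_injective _ toDual.injective]
    exact hJ

lemma isTrimIn_of_dual (h : IsTrimIn (ofDual ⁻¹' S) (toDual v) (toDual u) k) :
    IsTrimIn S u v k := by
  obtain ⟨⟨c', hc, hh, hl, hlen, hclm⟩, hb, hJ, hM⟩ := h
  refine ⟨⟨(c'.map ofDual).reverse, isCoverChain_of_dual hc, ?_, ?_, ?_, ?_⟩, ?_, ?_, ?_⟩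
  · rw [List.head?_reverse, List.getLast?_map, hl]; rfl
  · rw [List.getLast?_reverse, List.head?_map, hh]; rfl
  · rw [List.length_reverse, List.length_map, hlen]
  · intro y hy
    simp only [List.mem_reverse, List.mem_map] at hy
    obtain ⟨a, ha, rfl⟩ := hy
    exact leftModularIn_of_dual (hclm a ha)
  · intro c hcc hhh hll
    have hlen' := hb _ (isCoverChain_dual hcc)
      (by rw [List.head?_reverse, List.getLast?_map, hll]; rfl)
      (by rw [List.getLast?_reverse, List.head?_map, hhh]; rfl)
    rw [List.length_reverse, List.length_map] at hlen'
    exact hlen'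
  · have := hM
    rw [meetIrr_set_dual, Set.ncard_image_of_injective _ toDual.injective] at this
    exact this
  · have := hJ
    rw [joinIrr_set_dual, Set.ncard_image_of_injective _ toDual.injective] at this
    exact this

end Dual
end TrimProof
/-- Every closed interval of a trim lattice is trim. -/
theorem stmt_5 {α : Type*} [Lattice α] [Fintype α] [BoundedOrder α] (k : ℕ)
    (htrim : IsTrimIn (Set.univ : Set α) ⊥ ⊤ k) (u v : α) (huv : u ≤ v) :
    ∃ m : ℕ, IsTrimIn (Set.Icc u v) u v m := by
  have h0 : IsTrimIn (Set.Icc (⊥:α) ⊤) ⊥ ⊤ k := by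
    have hs : (Set.Icc (⊥:α) ⊤) = Set.univ := by ext y; simp
    rw [hs]; exact htrim
  obtain ⟨m1, hm1⟩ := TrimProof.isTrimIn_lower bot_le h0 bot_le le_top
  have h2 := TrimProof.isTrimIn_dual hm1
  have hset : (OrderDual.ofDual ⁻¹' Set.Icc (⊥:α) v : Set αᵒᵈ)
      = Set.Icc (OrderDual.toDual v) (OrderDual.toDual ⊥) := by
    ext y
    simp only [Set.mem_preimage, Set.mem_Icc]
    exact and_comm
  rw [hset] at h2
  obtain ⟨m2, hm2⟩ := TrimProof.isTrimIn_lower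
    (show OrderDual.toDual v ≤ OrderDual.toDual (⊥:α) from bot_le) h2
    (show OrderDual.toDual v ≤ OrderDual.toDual u from huv)
    (show OrderDual.toDual u ≤ OrderDual.toDual (⊥:α) from bot_le)
  refine ⟨m2, TrimProof.isTrimIn_of_dual (u := u) (v := v) (S := Set.Icc u v) ?_⟩
  have hset2 : (OrderDual.ofDual ⁻¹' Set.Icc u v : Set αᵒᵈ)
      = Set.Icc (OrderDual.toDual v) (OrderDual.toDual u) := by
    ext y
    simp only [Set.mem_preimage, Set.mem_Icc]
    exact and_comm
  rw [hset2]
  exact hm2
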